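/- For any adaptive query strategy against oracles of the form A(f) for total f : {0,1}^n → {0,1}^n, making fewer than 2^n − 1 queries in total: there exist two total functions f, g : {0,1}^n → {0,1}^n such that the strategy receives identical answers on A(f) and A(g), yet the last bits of f^{d+1}(0^n) and g^{d+1}(0^n) differ, where d bounds the number of adaptive rounds and d+1 ≤ n-iteration depth considered. -/

import Mathlib

/-- Length-`n` bit strings. -/
abbrev Str (n : ℕ) := Fin n → Bool

/-- The all-zero string `0^n`. -/
def zeroStr (n : ℕ) : Str n := fun _ => false

/-- Answers accumulated by the adaptive strategy `Q` against the bit-graph oracle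
`A(f)` after `k` rounds, as a partial function: `Q k a` is the set of strings `x`
queried in round `k` given earlier answers `a`, and a queried `x` is answered by
`f x` (i.e. all bits `A(f)(x·⟨i⟩)`, `i < n`). -/
def accAns {n : ℕ} (f : Str n → Str n)
    (Q : ℕ → (Str n → Option (Str n)) → Finset (Str n)) : ℕ → Str n → Option (Str n)
  | 0 => fun _ => none
  | k + 1 => fun x =>
      if x ∈ Q k (accAns f Q k) then some (f x) else accAns f Q k x

namespace Stmt10Aux

noncomputable section
open scoped Classical

variable {n : ℕ}

/-- Adversary state: committed partial answers `p`, current escape point `e`,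
set of chain points `C`. -/
structure St (n : ℕ) where
  p : Str n → Option (Str n)
  e : Str n
  C : Set (Str n)

variable (i : Fin n)

/-- Valid picks for the fresh escape point. -/
def ps (s : St n) (N : Finset (Str n)) : Set (Str n) :=
  {y | s.p y = none ∧ y ∉ N ∧ ∃ x, x i ≠ y i ∧ x ∉ s.C}

/-- Non-eating valid picks. -/
def ps2 (s : St n) (N : Finset (Str n)) : Set (Str n) :=
  {y | y ∈ ps i s N ∧ ∃ x, x i = y i ∧ x ∉ s.C ∧ x ≠ y}

def pickFn (s : St n) (N : Finset (Str n)) : Str n :=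
  if h : (ps2 i s N).Nonempty then h.some
  else if h : (ps i s N).Nonempty then h.some else s.e

variable (Q : ℕ → (Str n → Option (Str n)) → Finset (Str n))

def step (k : ℕ) (s : St n) : St n :=
  if s.e ∈ Q k s.p then
    { p := fun x => if x ∈ Q k s.p ∧ s.p x = none
             then some (if x = s.e then pickFn i s (Q k s.p) else x) else s.p x,
      e := pickFn i s (Q k s.p),
      C := s.C ∪ {pickFn i s (Q k s.p)} }
  else
    { p := fun x => if x ∈ Q k s.p ∧ s.p x = none
             then some (if x = s.e then pickFn i s (Q k s.p) else x) else s.p x,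
      e := s.e, C := s.C }

def run : ℕ → St n
  | 0 => ⟨fun _ => none, zeroStr n, {zeroStr n}⟩
  | k+1 => step i Q k (run k)

lemma run_succ_p (k : ℕ) :
    (run i Q (k+1)).p = fun x =>
      if x ∈ Q k (run i Q k).p ∧ (run i Q k).p x = none
      then some (if x = (run i Q k).e then pickFn i (run i Q k) (Q k (run i Q k).p) else x)
      else (run i Q k).p x := by
  show (step i Q k (run i Q k)).p = _
  unfold step
  split <;> rfl

lemma mono (k : ℕ) {x : Str n} {v : Str n} (h : (run i Q k).p x = some v) :
    (run i Q (k+1)).p x = some v := by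
  rw [run_succ_p]
  dsimp only
  rw [if_neg]
  · exact h
  · rintro ⟨-, h0⟩
    rw [h0] at h
    exact nomatch h

lemma mono_le {k j : ℕ} (hkj : k ≤ j) {x : Str n} {v : Str n}
    (h : (run i Q k).p x = some v) : (run i Q j).p x = some v := by
  induction j with
  | zero =>
    have : k = 0 := Nat.le_zero.mp hkj
    subst this; exact h
  | succ j ih =>
    rcases Nat.lt_or_ge k (j+1) with hlt | hge
    · exact mono i Q j (ih (Nat.lt_succ_iff.mp hlt))
    · have : k = j + 1 := le_antisymm hkj hge
      subst this; exact h

/-- `f` is consistent with the partial answers `p`. -/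
def Ext (p : Str n → Option (Str n)) (f : Str n → Str n) : Prop :=
  ∀ x v, p x = some v → f x = v

lemma accAns_run {f : Str n → Str n} {j : ℕ} (hf : Ext (run i Q j).p f) :
    ∀ k, k ≤ j → accAns f Q k = (run i Q k).p := by
  intro k
  induction k with
  | zero => intro _; rfl
  | succ k ih =>
    intro hk1
    have hk : k ≤ j := Nat.le_of_succ_le hk1
    have ihh := ih hk
    funext x
    show (if x ∈ Q k (accAns f Q k) then some (f x) else accAns f Q k x) = _
    rw [ihh, run_succ_p]
    dsimp only
    by_cases hx : x ∈ Q k (run i Q k).p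
    · rw [if_pos hx]
      cases hpk : (run i Q k).p x with
      | some v =>
        rw [if_neg (by rintro ⟨-, h0⟩; simp at h0)]
        rw [hf x v (mono_le i Q hk hpk)]
      | none =>
        rw [if_pos ⟨hx, rfl⟩]
        congr 1
        have h2 : (run i Q (k+1)).p x
            = some (if x = (run i Q k).e then pickFn i (run i Q k) (Q k (run i Q k).p) else x) := by
          rw [run_succ_p]; dsimp only; rw [if_pos ⟨hx, hpk⟩]
        exact hf x _ (mono_le i Q hk1 h2)
    · rw [if_neg hx, if_neg (by rintro ⟨h0, -⟩; exact hx h0)]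

lemma ext_of_le {f : Str n → Str n} {k j : ℕ} (hkj : k ≤ j)
    (hf : Ext (run i Q j).p f) : Ext (run i Q k).p f := by
  intro x v h
  exact hf x v (mono_le i Q hkj h)

variable {d : ℕ}

lemma card_str : Fintype.card (Str n) = 2 ^ n := by
  simp [Fintype.card_fun]

lemma budget (hsize : ∀ f : Str n → Str n, {x | accAns f Q d x ≠ none}.ncard < 2 ^ n - 1)
    {k : ℕ} (hk : k ≤ d) :
    ∃ u v : Str n, u ≠ v ∧ (run i Q k).p u = none ∧ (run i Q k).p v = none := by
  classical
  set f : Str n → Str n := fun x => ((run i Q d).p x).getD x with hfdef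
  have hext : Ext (run i Q d).p f := by intro x v h; simp [hfdef, h]
  have hacc := accAns_run i Q hext d le_rfl
  have hsz := hsize f
  rw [hacc] at hsz
  have hset : {x : Str n | (run i Q d).p x ≠ none}
      = ↑(Finset.univ.filter fun x => (run i Q d).p x ≠ none) := by
    ext x; simp
  rw [hset, Set.ncard_coe_finset] at hsz
  set D := Finset.univ.filter fun x : Str n => (run i Q d).p x ≠ none with hD
  set Dk := Finset.univ.filter fun x : Str n => (run i Q k).p x ≠ none with hDk
  have hsub : Dk ⊆ D := by
    intro x hx
    simp only [hDk, hD, Finset.mem_filter, Finset.mem_univ, true_and] at hx ⊢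
    cases hp : (run i Q k).p x with
    | none => exact absurd hp hx
    | some v => rw [mono_le i Q hk hp]; simp
  have hcard : Dk.card ≤ D.card := Finset.card_le_card hsub
  have hpow : 0 < 2 ^ n := Nat.pow_pos (by norm_num)
  have h2 : 1 < (Finset.univ \ Dk).card := by
    have hc : (Finset.univ \ Dk).card = 2 ^ n - Dk.card := by
      rw [Finset.card_sdiff_of_subset (Finset.subset_univ _), Finset.card_univ, card_str]
    omega
  obtain ⟨u, hu, v, hv, huv⟩ := Finset.one_lt_card.mp h2
  refine ⟨u, v, huv, ?_, ?_⟩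
  · simp only [hDk, Finset.mem_sdiff, Finset.mem_filter, Finset.mem_univ, true_and] at hu
    exact not_not.mp hu
  · simp only [hDk, Finset.mem_sdiff, Finset.mem_filter, Finset.mem_univ, true_and] at hv
    exact not_not.mp hv

lemma step_e_pos {k : ℕ} (he : (run i Q k).e ∈ Q k (run i Q k).p) :
    (run i Q (k+1)).e = pickFn i (run i Q k) (Q k (run i Q k).p) := by
  show (step i Q k (run i Q k)).e = _
  unfold step; rw [if_pos he]

lemma step_C_pos {k : ℕ} (he : (run i Q k).e ∈ Q k (run i Q k).p) :
    (run i Q (k+1)).C = (run i Q k).C ∪ {pickFn i (run i Q k) (Q k (run i Q k).p)} := by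
  show (step i Q k (run i Q k)).C = _
  unfold step; rw [if_pos he]

lemma step_e_neg {k : ℕ} (he : (run i Q k).e ∉ Q k (run i Q k).p) :
    (run i Q (k+1)).e = (run i Q k).e := by
  show (step i Q k (run i Q k)).e = _
  unfold step; rw [if_neg he]

lemma step_C_neg {k : ℕ} (he : (run i Q k).e ∉ Q k (run i Q k).p) :
    (run i Q (k+1)).C = (run i Q k).C := by
  show (step i Q k (run i Q k)).C = _
  unfold step; rw [if_neg he]

lemma pick_mem_ps {s : St n} {N : Finset (Str n)} (h : (ps i s N).Nonempty) :
    pickFn i s N ∈ ps i s N := by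
  unfold pickFn
  split
  · next h2 => exact h2.some_mem.1
  · exact h.some_mem

lemma pick_mem_ps2 {s : St n} {N : Finset (Str n)} (h : (ps2 i s N).Nonempty) :
    pickFn i s N ∈ ps2 i s N := by
  unfold pickFn; rw [dif_pos h]; exact h.some_mem

lemma boolaux {a b c : Bool} (h1 : a ≠ c) (h2 : b ≠ c) : a = b := by
  cases a <;> cases b <;> cases c <;> simp_all

/-- The adversary invariant. -/
structure GoodSt (i : Fin n) (s : St n) (k : ℕ) : Prop where
  h1 : s.p s.e = none
  h2 : ∃ m, m ≤ k ∧ ∀ f : Str n → Str n, Ext s.p f → f^[m] (zeroStr n) = s.e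
  h3 : ∀ x ∈ s.C, x ≠ s.e → s.p x ≠ none
  h4 : ∀ x v, s.p x = some v → x ∉ s.C → v = x
  h6 : ∃ w : Str n, w i ≠ s.e i ∧ w ∉ s.C
  h7 : s.e ∈ s.C
  h9 : ∀ bb : Bool, (∀ x : Str n, x i = bb → x ∈ s.C) →
        ∃ v : Str n, v i ≠ bb ∧ s.p v = none ∧ v ∉ s.C ∧
          ∀ x, s.p x = none → x = s.e ∨ x = v

lemma good_zero : GoodSt i (run i Q 0) 0 := by
  have hw : (Function.update (zeroStr n) i true) i = true := by simp
  have hwz : Function.update (zeroStr n) i true ≠ zeroStr n := by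
    intro h
    have := congrFun h i
    rw [hw] at this
    exact Bool.noConfusion this
  constructor
  · rfl
  · exact ⟨0, le_rfl, fun f _ => rfl⟩
  · intro x hx hne
    exact absurd hx hne
  · intro x v h _
    exact nomatch (h : (none : Option (Str n)) = some v)
  · refine ⟨Function.update (zeroStr n) i true, ?_, hwz⟩
    show Function.update (zeroStr n) i true i ≠ (zeroStr n) i
    rw [hw]
    exact fun h => Bool.noConfusion h
  · rfl
  · intro bb hbb
    cases bb with
    | true =>
      exact absurd (hbb _ hw) hwz
    | false =>
      refine ⟨Function.update (zeroStr n) i true, ?_, rfl, hwz, ?_⟩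
      · show Function.update (zeroStr n) i true i ≠ false
        rw [hw]; exact fun h => Bool.noConfusion h
      · intro x _
        by_cases hb : x i = false
        · exact Or.inl (hbb x hb)
        · refine Or.inr (funext fun j => ?_)
          by_cases hj : j = i
          · subst hj
            rw [hw]
            cases hxi : x j with
            | false => exact absurd hxi hb
            | true => rfl
          · have hx' : Function.update x i false = zeroStr n :=
              hbb _ (by simp)
            have h5 := congrFun hx' j
            rw [Function.update_apply, if_neg hj] at h5
            rw [Function.update_apply, if_neg hj, h5]

lemma good_step (hsize : ∀ f : Str n → Str n, {x | accAns f Q d x ≠ none}.ncard < 2 ^ n - 1)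
    {k : ℕ} (hk1 : k + 1 ≤ d) (G : GoodSt i (run i Q k) k) :
    GoodSt i (run i Q (k+1)) (k+1) := by
  classical
  obtain ⟨u₁, u₂, huu, hu₁, hu₂⟩ := budget i Q hsize hk1
  set s := run i Q k with hs
  set N := Q k s.p with hN
  set y := pickFn i s N with hy
  have hp' : (run i Q (k+1)).p = fun x =>
      if x ∈ N ∧ s.p x = none then some (if x = s.e then y else x) else s.p x :=
    run_succ_p i Q k
  have hfresh : ∀ u : Str n, (run i Q (k+1)).p u = none → s.p u = none ∧ u ∉ N := by
    intro u hu
    rw [hp'] at hu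
    dsimp only at hu
    by_cases h : u ∈ N ∧ s.p u = none
    · rw [if_pos h] at hu; exact nomatch hu
    · rw [if_neg h] at hu
      exact ⟨hu, fun hN' => h ⟨hN', hu⟩⟩
  have hkeep : ∀ u : Str n, u ∉ N → (run i Q (k+1)).p u = s.p u := by
    intro u hu
    rw [hp']; dsimp only
    rw [if_neg (fun h => hu h.1)]
  have hmono : ∀ {x v : Str n}, s.p x = some v → (run i Q (k+1)).p x = some v :=
    fun h => mono i Q k h
  have hnn : ∀ x, x ∈ s.C → x ≠ s.e → (run i Q (k+1)).p x ≠ none := by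
    intro x hx hne h0
    exact G.h3 x hx hne (hfresh x h0).1
  obtain ⟨m, hm, horb⟩ := G.h2
  by_cases he : s.e ∈ N
  · -- escape point was queried
    have hE : (run i Q (k+1)).e = y := step_e_pos i Q he
    have hC : (run i Q (k+1)).C = s.C ∪ {y} := step_C_pos i Q he
    have hpe : (run i Q (k+1)).p s.e = some y := by
      rw [hp']; dsimp only
      rw [if_pos ⟨he, G.h1⟩, if_pos rfl]
    have hf₁ := hfresh u₁ hu₁
    have hf₂ := hfresh u₂ hu₂
    have hne₁ : u₁ ≠ s.e := fun h => hf₁.2 (by rw [h]; exact he)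
    have hne₂ : u₂ ≠ s.e := fun h => hf₂.2 (by rw [h]; exact he)
    have hpsne : (ps i s N).Nonempty := by
      by_contra hemp
      have key : ∀ u : Str n, s.p u = none → u ∉ N → ∀ x : Str n, x i ≠ u i → x ∈ s.C := by
        intro u h1 h2 x hx
        by_contra hxC
        exact hemp ⟨u, h1, h2, x, hx, hxC⟩
      by_cases hb : u₁ i = u₂ i
      · obtain ⟨v, -, -, -, hv4⟩ := G.h9 (!(u₁ i)) (by
          intro x hx
          exact key u₁ hf₁.1 hf₁.2 x (by rw [hx]; cases (u₁ i) <;> simp))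
        have e1 : u₁ = v := (hv4 u₁ hf₁.1).resolve_left hne₁
        have e2 : u₂ = v := (hv4 u₂ hf₂.1).resolve_left hne₂
        exact huu (e1.trans e2.symm)
      · have hc : u₁ ∈ s.C := key u₂ hf₂.1 hf₂.2 u₁ hb
        exact G.h3 u₁ hc hne₁ hf₁.1
    have hyps := pick_mem_ps i hpsne
    obtain ⟨hy1, hy2, hy3⟩ := hyps
    rw [← hy] at hy1 hy2 hy3
    have hyne : y ≠ s.e := fun h => hy2 (by rw [h]; exact he)
    have hyC : y ∉ s.C := fun hc => G.h3 y hc hyne hy1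
    constructor
    · rw [hE, hkeep y hy2]; exact hy1
    · refine ⟨m + 1, Nat.succ_le_succ hm, fun f hf => ?_⟩
      have hf' : Ext s.p f := fun x v h => hf x v (hmono h)
      rw [Function.iterate_succ_apply', horb f hf', hf s.e y hpe, hE]
    · intro x hx hne
      rw [hC] at hx
      rw [hE] at hne
      rcases hx with hx | hx
      · by_cases hxe : x = s.e
        · subst hxe; rw [hpe]; simp
        · exact hnn x hx hxe
      · exact absurd hx hne
    · intro x v hpv hxC
      rw [hC] at hxC
      rw [hp'] at hpv; dsimp only at hpv
      by_cases hcond : x ∈ N ∧ s.p x = none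
      · rw [if_pos hcond] at hpv
        have hxe : x ≠ s.e := fun h => hxC (Or.inl (h ▸ G.h7))
        rw [if_neg hxe] at hpv
        exact (Option.some.inj hpv).symm
      · rw [if_neg hcond] at hpv
        exact G.h4 x v hpv (fun h => hxC (Or.inl h))
    · obtain ⟨x, hxb, hxC⟩ := hy3
      refine ⟨x, ?_, ?_⟩
      · rw [hE]; exact hxb
      · rw [hC]
        rintro (h | h)
        · exact hxC h
        · exact hxb (by rw [Set.mem_singleton_iff.mp h])
    · rw [hE, hC]; exact Or.inr rfl
    · intro bb hbb
      rw [hC] at hbb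
      rw [hE, hC]
      by_cases hbby : bb = y i
      · by_cases hps2 : (ps2 i s N).Nonempty
        · exfalso
          obtain ⟨-, x, hxb, hxC, hxy⟩ := pick_mem_ps2 i hps2
          rcases hbb x (hxb.trans hbby.symm) with h | h
          · exact hxC h
          · exact hxy (Set.mem_singleton_iff.mp h)
        · -- the "eating" case
          have hclass : ∀ u : Str n, (run i Q (k+1)).p u = none → u ≠ y →
              u i ≠ bb ∧ u ∉ s.C ∧ s.p u = none ∧ u ∉ N ∧ u ≠ s.e := by
            intro u hu0 huy
            have hfu := hfresh u hu0
            have hune : u ≠ s.e := fun h => hfu.2 (by rw [h]; exact he)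
            have huC : u ∉ s.C := fun hc => G.h3 u hc hune hfu.1
            refine ⟨?_, huC, hfu.1, hfu.2, hune⟩
            intro hub
            rcases hbb u hub with h | h
            · exact huC h
            · exact huy (Set.mem_singleton_iff.mp h)
          have hybb : y i = bb := hbby.symm
          by_cases h1y : u₁ = y
          · have hu2y : u₂ ≠ y := fun h => huu (h1y.trans h.symm)
            have hcl := hclass u₂ hu₂ hu2y
            refine ⟨u₂, hcl.1, ?_, ?_, ?_⟩
            · rw [hkeep u₂ hcl.2.2.2.1]; exact hcl.2.2.1
            · rintro (h | h)
              · exact hcl.2.1 h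
              · exact hu2y (Set.mem_singleton_iff.mp h)
            · intro x hx0
              by_contra hcon
              push_neg at hcon
              obtain ⟨hxy, hxu⟩ := hcon
              have hclx := hclass x hx0 hxy
              apply hps2
              refine ⟨x, ⟨hclx.2.2.1, hclx.2.2.2.1, y, ?_, hyC⟩, u₂, ?_, hcl.2.1, Ne.symm hxu⟩
              · intro h
                exact hclx.1 (h ▸ hybb)
              · exact boolaux hcl.1 hclx.1
          · by_cases h2y : u₂ = y
            · have hu1y : u₁ ≠ y := h1y
              have hcl := hclass u₁ hu₁ hu1y
              refine ⟨u₁, hcl.1, ?_, ?_, ?_⟩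
              · rw [hkeep u₁ hcl.2.2.2.1]; exact hcl.2.2.1
              · rintro (h | h)
                · exact hcl.2.1 h
                · exact hu1y (Set.mem_singleton_iff.mp h)
              · intro x hx0
                by_contra hcon
                push_neg at hcon
                obtain ⟨hxy, hxu⟩ := hcon
                have hclx := hclass x hx0 hxy
                apply hps2
                refine ⟨x, ⟨hclx.2.2.1, hclx.2.2.2.1, y, ?_, hyC⟩, u₁, ?_, hcl.2.1, Ne.symm hxu⟩
                · intro h
                  exact hclx.1 (h ▸ hybb)
                · exact boolaux hcl.1 hclx.1
            · exfalso
              have hcl₁ := hclass u₁ hu₁ h1y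
              have hcl₂ := hclass u₂ hu₂ h2y
              apply hps2
              refine ⟨u₁, ⟨hcl₁.2.2.1, hcl₁.2.2.2.1, y, ?_, hyC⟩, u₂, ?_, hcl₂.2.1, huu.symm⟩
              · intro h
                exact hcl₁.1 (h ▸ hybb)
              · exact boolaux hcl₂.1 hcl₁.1
      · exfalso
        obtain ⟨x, hxb, hxC⟩ := hy3
        have hxbb : x i = bb := boolaux hxb hbby
        rcases hbb x hxbb with h | h
        · exact hxC h
        · exact hxb (by rw [Set.mem_singleton_iff.mp h])
  · -- escape point not queried
    have hE : (run i Q (k+1)).e = s.e := step_e_neg i Q he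
    have hC : (run i Q (k+1)).C = s.C := step_C_neg i Q he
    constructor
    · rw [hE, hkeep s.e he]; exact G.h1
    · exact ⟨m, Nat.le_succ_of_le hm, fun f hf =>
        ((horb f (fun x v h => hf x v (hmono h))).trans hE.symm)⟩
    · intro x hx hne
      rw [hC] at hx; rw [hE] at hne
      exact hnn x hx hne
    · intro x v hpv hxC
      rw [hC] at hxC
      rw [hp'] at hpv; dsimp only at hpv
      by_cases hcond : x ∈ N ∧ s.p x = none
      · rw [if_pos hcond] at hpv
        have hxe : x ≠ s.e := fun h => he (h ▸ hcond.1)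
        rw [if_neg hxe] at hpv
        exact (Option.some.inj hpv).symm
      · rw [if_neg hcond] at hpv
        exact G.h4 x v hpv hxC
    · obtain ⟨w, hw1, hw2⟩ := G.h6
      exact ⟨w, by rw [hE]; exact hw1, by rw [hC]; exact hw2⟩
    · rw [hE, hC]; exact G.h7
    · intro bb hbb
      rw [hC] at hbb
      rw [hE, hC]
      obtain ⟨v, hv1, hv2, hv3, hv4⟩ := G.h9 bb hbb
      have hvN : v ∉ N := by
        intro hvN
        have hpv : (run i Q (k+1)).p v ≠ none := by
          rw [hp']; dsimp only
          rw [if_pos ⟨hvN, hv2⟩]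
          simp
        have e1 : u₁ = s.e := by
          rcases hv4 u₁ (hfresh u₁ hu₁).1 with h | h
          · exact h
          · exact absurd (h ▸ hu₁) hpv
        have e2 : u₂ = s.e := by
          rcases hv4 u₂ (hfresh u₂ hu₂).1 with h | h
          · exact h
          · exact absurd (h ▸ hu₂) hpv
        exact huu (e1.trans e2.symm)
      refine ⟨v, hv1, ?_, hv3, ?_⟩
      · rw [hkeep v hvN]; exact hv2
      · intro x hx0
        exact hv4 x (hfresh x hx0).1

lemma good (hsize : ∀ f : Str n → Str n, {x | accAns f Q d x ≠ none}.ncard < 2 ^ n - 1) :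
    ∀ k, k ≤ d → GoodSt i (run i Q k) k := by
  intro k
  induction k with
  | zero => intro _; exact good_zero i Q
  | succ k ih => intro hk; exact good_step i Q hsize hk (ih (Nat.le_of_succ_le hk))

end
end Stmt10Aux

/-- adversary form of Theorem 3: for any adaptive `d`-round query
strategy against bit-graph oracles `A(f)`, making fewer than `2^n − 1` queries in
total on every run, there are total functions `f, g : {0,1}^n → {0,1}^n` that give
identical answers to the strategy while the last bits of `f^{d+1}(0^n)` and
`g^{d+1}(0^n)` differ. -/
theorem stmt10 (n d : ℕ) (hn : 0 < n)
    (Q : ℕ → (Str n → Option (Str n)) → Finset (Str n))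
    (hsize : ∀ f : Str n → Str n, {x | accAns f Q d x ≠ none}.ncard < 2 ^ n - 1) :
    ∃ f g : Str n → Str n,
      accAns f Q d = accAns g Q d ∧
      (f^[d + 1] (zeroStr n)) ⟨n - 1, Nat.sub_lt hn Nat.one_pos⟩ ≠
        (g^[d + 1] (zeroStr n)) ⟨n - 1, Nat.sub_lt hn Nat.one_pos⟩ := by
  classical
  set i : Fin n := ⟨n - 1, Nat.sub_lt hn Nat.one_pos⟩ with hi
  have G := Stmt10Aux.good i Q hsize d le_rfl
  set s := Stmt10Aux.run i Q d with hs
  obtain ⟨m, hm, horb⟩ := G.h2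
  obtain ⟨w, hw1, hw2⟩ := G.h6
  set f : Str n → Str n := fun x => (s.p x).getD x with hf
  set g : Str n → Str n := fun x => if x = s.e then w else (s.p x).getD x with hg
  have hef : Stmt10Aux.Ext s.p f := fun x v h => by simp [hf, h]
  have heg : Stmt10Aux.Ext s.p g := by
    intro x v h
    have hxe : x ≠ s.e := by
      intro hx
      rw [hx, G.h1] at h
      exact nomatch h
    simp [hg, hxe, h]
  have hacc : accAns f Q d = accAns g Q d := by
    rw [Stmt10Aux.accAns_run i Q hef d le_rfl, Stmt10Aux.accAns_run i Q heg d le_rfl]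
  have hfe : f s.e = s.e := by simp [hf, G.h1]
  have hwe : w ≠ s.e := fun h => hw1 (by rw [h])
  have hgw : g w = w := by
    rw [hg]
    dsimp only
    rw [if_neg hwe]
    cases hpw : s.p w with
    | none => rfl
    | some v => simp [G.h4 w v hpw hw2]
  have horbf : f^[d+1] (zeroStr n) = s.e := by
    have h0 : f^[m] (zeroStr n) = s.e := horb f hef
    have hd : d + 1 = (d + 1 - m) + m := by omega
    rw [hd, Function.iterate_add_apply, h0, Function.iterate_fixed hfe]
  have horbg : g^[d+1] (zeroStr n) = w := by
    have h0 : g^[m] (zeroStr n) = s.e := horb g heg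
    have hge : g s.e = w := by simp [hg]
    have hd : d + 1 = ((d - m) + 1) + m := by omega
    rw [hd, Function.iterate_add_apply, h0, Function.iterate_succ_apply, hge,
      Function.iterate_fixed hgw]
  refine ⟨f, g, hacc, ?_⟩
  rw [horbf, horbg]
  exact fun h => hw1 h.symm
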